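/- Although r(s) → +∞ as s → T−, for every t ∈ [0,T) the interest rate r is integrable on (t,T) and the money market account value is finite and given in closed form by exp(∫_t^T r(s) ds) = β(t) · e^{(δ+σ²/2)(T−t)}. -/

import Mathlib

open MeasureTheory Real Set Filter

/-- Standard normal cdf `N(x)`. -/
noncomputable def stdCdf (x : ℝ) : ℝ := ∫ y in Set.Iic x, Real.exp (-y ^ 2 / 2) / Real.sqrt (2 * Real.pi)

/-- Standard normal pdf `n(x)`. -/
noncomputable def stdPdf (x : ℝ) : ℝ := Real.exp (-x ^ 2 / 2) / Real.sqrt (2 * Real.pi)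

/-- `β(t) = 1 + (2σ/√(2δ+σ²))·(N(√((2δ+σ²)(T−t))) − 1/2)`. -/
noncomputable def betaIR (T σ δ t : ℝ) : ℝ :=
  1 + 2 * σ / Real.sqrt (2 * δ + σ ^ 2) *
    (stdCdf (Real.sqrt ((2 * δ + σ ^ 2) * (T - t))) - 1 / 2)

/-- `γ(t) = σ·n(√((2δ+σ²)(T−t)))/(√(T−t)·β(t))`. -/
noncomputable def gammaIR (T σ δ t : ℝ) : ℝ :=
  σ * stdPdf (Real.sqrt ((2 * δ + σ ^ 2) * (T - t))) / (Real.sqrt (T - t) * betaIR T σ δ t)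

/-- Time-dependent interest rate `r(t) = γ(t) + δ + σ²/2`. -/
noncomputable def rateIR (T σ δ t : ℝ) : ℝ := gammaIR T σ δ t + δ + σ ^ 2 / 2


lemma stdPdf_nonneg (x : ℝ) : 0 ≤ stdPdf x := by
  unfold stdPdf; positivity

lemma continuous_stdPdf : Continuous stdPdf := by
  unfold stdPdf; fun_prop

lemma integrable_stdPdf : Integrable stdPdf := by
  have h := (integrable_exp_neg_mul_sq (by norm_num : (0:ℝ) < 1/2)).div_const
    (Real.sqrt (2 * Real.pi))
  refine h.congr (Filter.Eventually.of_forall fun x => ?_)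
  show Real.exp (-(1/2 : ℝ) * x ^ 2) / Real.sqrt (2 * Real.pi) = _
  unfold stdPdf
  rw [show -(1/2 : ℝ) * x ^ 2 = -x ^ 2 / 2 by ring]

lemma stdCdf_eq_integral (x : ℝ) : stdCdf x = ∫ y in Set.Iic x, stdPdf y := rfl

lemma stdCdf_zero : stdCdf 0 = 1 / 2 := by
  have heven : ∀ y : ℝ, stdPdf (-y) = stdPdf y := by
    intro y; unfold stdPdf; rw [neg_pow]; ring_nf
  have h1 : (∫ y in Set.Iic (0:ℝ), stdPdf y) = ∫ y in Set.Ioi (0:ℝ), stdPdf y := by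
    have h := integral_comp_neg_Iic (0:ℝ) stdPdf
    simp only [neg_zero] at h
    rw [← h]
    exact setIntegral_congr_fun measurableSet_Iic fun y _ => (heven y).symm
  have h2 : (∫ y in Set.Iic (0:ℝ), stdPdf y) + (∫ y in Set.Ioi (0:ℝ), stdPdf y)
      = ∫ y, stdPdf y := by
    rw [← setIntegral_union (Set.Iic_disjoint_Ioi le_rfl) measurableSet_Ioi
      integrable_stdPdf.integrableOn integrable_stdPdf.integrableOn]
    rw [Set.Iic_union_Ioi]
    simp [Measure.restrict_univ]
  have h3 : (∫ y, stdPdf y) = 1 := by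
    unfold stdPdf
    rw [show (fun y : ℝ => Real.exp (-y ^ 2 / 2) / Real.sqrt (2 * Real.pi))
        = fun y : ℝ => Real.exp (-(1/2) * y ^ 2) / Real.sqrt (2 * Real.pi) by
      funext y; rw [show -(1/2 : ℝ) * y ^ 2 = -y ^ 2 / 2 by ring]]
    rw [integral_div, integral_gaussian]
    rw [show (Real.pi / (1/2)) = 2 * Real.pi by ring]
    rw [div_self (by positivity)]
  rw [stdCdf_eq_integral, ← h3, ← h2, h1]; ring

lemma stdCdf_eq (x : ℝ) : stdCdf x = 1 / 2 + ∫ y in (0:ℝ)..x, stdPdf y := by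
  have := intervalIntegral.integral_Iic_sub_Iic (μ := volume) (a := (0:ℝ)) (b := x)
    integrable_stdPdf.integrableOn integrable_stdPdf.integrableOn
  rw [stdCdf_eq_integral, ← this, ← stdCdf_eq_integral 0, stdCdf_zero]; ring

lemma hasDerivAt_stdCdf (x : ℝ) : HasDerivAt stdCdf (stdPdf x) x := by
  have h : HasDerivAt (fun u => ∫ y in (0:ℝ)..u, stdPdf y) (stdPdf x) x :=
    intervalIntegral.integral_hasDerivAt_right
      (integrable_stdPdf.intervalIntegrable)
      (continuous_stdPdf.stronglyMeasurable.stronglyMeasurableAtFilter)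
      continuous_stdPdf.continuousAt
  have : stdCdf = fun u => 1/2 + ∫ y in (0:ℝ)..u, stdPdf y := funext stdCdf_eq
  rw [this]
  exact h.const_add _

lemma continuous_stdCdf : Continuous stdCdf :=
  continuous_iff_continuousAt.mpr fun x => (hasDerivAt_stdCdf x).continuousAt

lemma stdCdf_half_le {x : ℝ} (hx : 0 ≤ x) : 1 / 2 ≤ stdCdf x := by
  rw [stdCdf_eq]
  have : 0 ≤ ∫ y in (0:ℝ)..x, stdPdf y :=
    intervalIntegral.integral_nonneg hx fun y _ => stdPdf_nonneg y
  linarith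

theorem rateIR_integrable_money_market (K T σ δ : ℝ)
    (hK : 0 < K) (hT : 0 < T) (hσ : 0 < σ) (hδ : 0 ≤ δ)
    (t : ℝ) (ht0 : 0 ≤ t) (htT : t < T) :
    IntegrableOn (rateIR T σ δ) (Set.Ioo t T) ∧
      Real.exp (∫ s in t..T, rateIR T σ δ s)
        = betaIR T σ δ t * Real.exp ((δ + σ ^ 2 / 2) * (T - t)) := by
  have ha : (0:ℝ) < 2 * δ + σ ^ 2 := by positivity
  set a : ℝ := 2 * δ + σ ^ 2 with ha_def
  set c : ℝ := δ + σ ^ 2 / 2 with hc_def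
  -- positivity of β
  have hβpos : ∀ s : ℝ, 0 < betaIR T σ δ s := by
    intro s
    unfold betaIR
    have h1 : 1 / 2 ≤ stdCdf (Real.sqrt (a * (T - s))) := stdCdf_half_le (Real.sqrt_nonneg _)
    have h2 : 0 ≤ 2 * σ / Real.sqrt a := by positivity
    nlinarith [mul_nonneg h2 (by linarith : (0:ℝ) ≤ stdCdf (Real.sqrt (a * (T - s))) - 1/2)]
  have hβT : betaIR T σ δ T = 1 := by
    unfold betaIR
    rw [sub_self, mul_zero, Real.sqrt_zero, stdCdf_zero]
    ring
  -- continuity of β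
  have hβcont : Continuous (betaIR T σ δ) := by
    unfold betaIR
    exact continuous_const.add (continuous_const.mul
      ((continuous_stdCdf.comp ((continuous_const.mul
        (continuous_const.sub continuous_id)).sqrt)).sub continuous_const))
  -- antiderivative
  set F : ℝ → ℝ := fun s => c * s - Real.log (betaIR T σ δ s) with hF_def
  have hFderiv : ∀ s ∈ Set.Ioo t T, HasDerivAt F (rateIR T σ δ s) s := by
    intro s hs
    have hTs : 0 < T - s := by simp [Set.mem_Ioo] at hs; linarith [hs.2]
    have hx : 0 < a * (T - s) := mul_pos ha hTs
    have h1 : HasDerivAt (fun u : ℝ => a * (T - u)) (a * (-1)) s :=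
      ((hasDerivAt_id s).const_sub T).const_mul a
    have h2 : HasDerivAt (fun u : ℝ => Real.sqrt (a * (T - u)))
        (1 / (2 * Real.sqrt (a * (T - s))) * (a * (-1))) s :=
      (Real.hasDerivAt_sqrt hx.ne').comp s h1
    have h3 : HasDerivAt (fun u : ℝ => stdCdf (Real.sqrt (a * (T - u))))
        (stdPdf (Real.sqrt (a * (T - s))) * (1 / (2 * Real.sqrt (a * (T - s))) * (a * (-1)))) s :=
      (hasDerivAt_stdCdf _).comp s h2
    have h4 : HasDerivAt (betaIR T σ δ)
        (2 * σ / Real.sqrt a * (stdPdf (Real.sqrt (a * (T - s))) *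
          (1 / (2 * Real.sqrt (a * (T - s))) * (a * (-1))))) s := by
      unfold betaIR
      exact ((h3.sub_const (1/2)).const_mul _).const_add 1
    have hsa : Real.sqrt a ≠ 0 := (Real.sqrt_pos.mpr ha).ne'
    have hsTs : Real.sqrt (T - s) ≠ 0 := (Real.sqrt_pos.mpr hTs).ne'
    have haa : Real.sqrt a * Real.sqrt a = a := Real.mul_self_sqrt ha.le
    have hsplit : Real.sqrt (a * (T - s)) = Real.sqrt a * Real.sqrt (T - s) :=
      Real.sqrt_mul ha.le _
    have hD : 2 * σ / Real.sqrt a * (stdPdf (Real.sqrt (a * (T - s))) *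
          (1 / (2 * Real.sqrt (a * (T - s))) * (a * (-1))))
        = -(σ * stdPdf (Real.sqrt (a * (T - s))) / Real.sqrt (T - s)) := by
      rw [hsplit]
      field_simp
      linear_combination (stdPdf (Real.sqrt a * Real.sqrt (T - s))) * haa
    rw [hD] at h4
    have hlog : HasDerivAt (fun u => Real.log (betaIR T σ δ u))
        (-(σ * stdPdf (Real.sqrt (a * (T - s))) / Real.sqrt (T - s)) / betaIR T σ δ s) s :=
      h4.log (hβpos s).ne'
    have h5 : HasDerivAt F
        (c * 1 - -(σ * stdPdf (Real.sqrt (a * (T - s))) / Real.sqrt (T - s)) / betaIR T σ δ s)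
        s := ((hasDerivAt_id s).const_mul c).sub hlog
    convert h5 using 1
    unfold rateIR gammaIR
    rw [← ha_def]
    field_simp
    ring
  have hFcont : ContinuousOn F (Set.Icc t T) :=
    ((continuous_const.mul continuous_id).continuousOn).sub
      (hβcont.continuousOn.log fun s _ => (hβpos s).ne')
  have hrnonneg : ∀ s ∈ Set.Ioo t T, 0 ≤ rateIR T σ δ s := by
    intro s hs
    unfold rateIR gammaIR
    rw [← ha_def]
    have := hβpos s
    have h1 : 0 ≤ σ * stdPdf (Real.sqrt (a * (T - s))) / (Real.sqrt (T - s) * betaIR T σ δ s) :=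
      div_nonneg (mul_nonneg hσ.le (stdPdf_nonneg _))
        (mul_nonneg (Real.sqrt_nonneg _) this.le)
    positivity
  have hIntIoc : IntegrableOn (rateIR T σ δ) (Set.Ioc t T) :=
    intervalIntegral.integrableOn_deriv_of_nonneg hFcont hFderiv hrnonneg
  have hII : IntervalIntegrable (rateIR T σ δ) volume t T :=
    (intervalIntegrable_iff_integrableOn_Ioc_of_le htT.le).mpr hIntIoc
  refine ⟨hIntIoc.mono_set Set.Ioo_subset_Ioc_self, ?_⟩
  have hval : (∫ s in t..T, rateIR T σ δ s) = F T - F t :=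
    intervalIntegral.integral_eq_sub_of_hasDeriv_right_of_le htT.le hFcont
      (fun x hx => (hFderiv x hx).hasDerivWithinAt) hII
  rw [hval, hF_def]
  simp only [hβT, Real.log_one]
  rw [show c * T - 0 - (c * t - Real.log (betaIR T σ δ t))
      = Real.log (betaIR T σ δ t) + c * (T - t) by ring]
  rw [Real.exp_add, Real.exp_log (hβpos t)]
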